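/- Every point of 𝕏 = {(x, y) ∈ ℝ² : |y| ≤ |sin x|} (subspace topology) has an open neighborhood N such that every point of N other than the point itself satisfies local 1-componency in 𝕏. (Equivalently, the set of points of 𝕏 failing local 1-componency — the pinch points (nπ, 0) — is discrete: every point has a punctured neighborhood avoiding it.) -/

import Mathlib

/-- The space `𝕏 = {(x, y) ∈ ℝ² : |y| ≤ |sin x|}` with the subspace topology. -/
def BraidSpace : Type := {p : ℝ × ℝ // |p.2| ≤ |Real.sin p.1|}

instance : TopologicalSpace BraidSpace := instTopologicalSpaceSubtype

/-- A point `z` of a space satisfies local 1-componency if every open neighborhood of `z`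
contains an open neighborhood `N` of `z` with `N \ {z}` connected. -/
def LocallyOneComponentAt {X : Type*} [TopologicalSpace X] (z : X) : Prop :=
  ∀ U : Set X, IsOpen U → z ∈ U →
    ∃ N : Set X, IsOpen N ∧ z ∈ N ∧ N ⊆ U ∧ IsConnected (N \ {z})

open Set Topology

namespace BraidAux

/-- The ambient region in the plane. -/
def Xset : Set (ℝ × ℝ) := {p | |p.2| ≤ |Real.sin p.1|}

/-- Chain criterion for preconnectedness via convex pieces. -/
lemma chain_preconn {S L : Set (ℝ × ℝ)} {z0 : ℝ × ℝ} (hL : Convex ℝ L) (hz : z0 ∈ L)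
    (hLS : L ⊆ S)
    (h : ∀ p ∈ S, ∃ C1 C2 : Set (ℝ × ℝ), Convex ℝ C1 ∧ Convex ℝ C2 ∧ p ∈ C1 ∧ C1 ⊆ S ∧
      C2 ⊆ S ∧ (C1 ∩ C2).Nonempty ∧ (C2 ∩ L).Nonempty) : IsPreconnected S := by
  apply isPreconnected_of_forall z0
  intro p hp
  obtain ⟨C1, C2, hc1, hc2, hp1, h1S, h2S, ⟨w1, hw1⟩, ⟨w2, hw2⟩⟩ := h p hp
  refine ⟨(C1 ∪ C2) ∪ L, ?_, Or.inr hz, Or.inl (Or.inl hp1), ?_⟩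
  · rintro x ((hx | hx) | hx)
    exacts [h1S hx, h2S hx, hLS hx]
  · refine IsPreconnected.union w2 (Or.inr hw2.1) hw2.2 ?_ hL.isPreconnected
    exact IsPreconnected.union w1 hw1.1 hw1.2 hc1.isPreconnected hc2.isPreconnected

/-- A punctured open box in the plane is preconnected. -/
lemma punctured_box_preconn {a b δ ε : ℝ} (hδ : 0 < δ) (hε : 0 < ε) :
    IsPreconnected ((Ioo (a - δ) (a + δ) ×ˢ Ioo (b - ε) (b + ε)) \ {(a, b)}) := by
  set I : Set ℝ := Ioo (a - δ) (a + δ) with hI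
  set J : Set ℝ := Ioo (b - ε) (b + ε) with hJ
  set S : Set (ℝ × ℝ) := (I ×ˢ J) \ {(a, b)} with hS
  have hcI : a + δ / 2 ∈ I := by constructor <;> linarith
  have haI : a ∈ I := by constructor <;> linarith
  have hbJ : b ∈ J := by constructor <;> linarith
  have hb2J : b + ε / 2 ∈ J := by constructor <;> linarith
  have hLS : ({a + δ / 2} ×ˢ J : Set (ℝ × ℝ)) ⊆ S := by
    rintro ⟨x, y⟩ ⟨hx, hy⟩
    simp only [mem_singleton_iff] at hx
    refine ⟨⟨by rw [hx]; exact hcI, hy⟩, ?_⟩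
    simp only [mem_singleton_iff, Prod.mk.injEq, not_and]
    intro h; exfalso; rw [hx] at h; linarith
  refine chain_preconn (z0 := (a + δ / 2, b))
    ((convex_singleton _).prod (convex_Ioo _ _)) ⟨rfl, hbJ⟩ hLS ?_
  rintro ⟨x, y⟩ ⟨⟨hx, hy⟩, hne⟩
  simp only [mem_singleton_iff, Prod.mk.injEq, not_and] at hne
  by_cases hyb : y = b
  · subst hyb
    have hxa : x ≠ a := fun h => hne h rfl
    refine ⟨{x} ×ˢ J, I ×ˢ {y + ε / 2}, (convex_singleton _).prod (convex_Ioo _ _),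
      (convex_Ioo _ _).prod (convex_singleton _), ⟨rfl, hy⟩, ?_, ?_, ?_, ?_⟩
    · rintro ⟨x', y'⟩ ⟨hx', hy'⟩
      simp only [mem_singleton_iff] at hx'
      exact ⟨⟨by rw [hx']; exact hx, hy'⟩, by
        simp only [mem_singleton_iff, Prod.mk.injEq, not_and]
        intro h; exfalso; exact hxa (hx'.symm.trans h)⟩
    · rintro ⟨x', y'⟩ ⟨hx', hy'⟩
      simp only [mem_singleton_iff] at hy'
      refine ⟨⟨hx', by rw [hy']; exact hb2J⟩, ?_⟩
      simp only [mem_singleton_iff, Prod.mk.injEq, not_and]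
      intro _; rw [hy']; intro h; linarith
    · exact ⟨(x, y + ε / 2), ⟨rfl, hb2J⟩, ⟨hx, rfl⟩⟩
    · exact ⟨(a + δ / 2, y + ε / 2), ⟨hcI, rfl⟩, ⟨rfl, hb2J⟩⟩
  · refine ⟨I ×ˢ {y}, I ×ˢ {y}, (convex_Ioo _ _).prod (convex_singleton _),
      (convex_Ioo _ _).prod (convex_singleton _), ⟨hx, rfl⟩, ?_, ?_, ⟨(x, y), ⟨hx, rfl⟩, ⟨hx, rfl⟩⟩,
      ⟨(a + δ / 2, y), ⟨hcI, rfl⟩, ⟨rfl, hy⟩⟩⟩ <;>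
    · rintro ⟨x', y'⟩ ⟨hx', hy'⟩
      simp only [mem_singleton_iff] at hy'
      refine ⟨⟨hx', by rw [hy']; exact hy⟩, ?_⟩
      simp only [mem_singleton_iff, Prod.mk.injEq, not_and]
      intro _; rw [hy']; exact hyb

/-- Preconnectedness of a punctured neighborhood at a top boundary point. -/
lemma top_preconn {a b δ ε : ℝ} (hδ : 0 < δ) (hε : 0 < ε) (hεb : ε < b)
    (hb : |Real.sin a| = b)
    (hlow : ∀ x ∈ Ioo (a - δ) (a + δ), b - ε / 2 < |Real.sin x|) :
    IsPreconnected (((Ioo (a - δ) (a + δ) ×ˢ Ioo (b - ε) (b + ε)) ∩ Xset) \ {(a, b)}) := by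
  set I : Set ℝ := Ioo (a - δ) (a + δ) with hI
  set J : Set ℝ := Ioo (b - ε) (b + ε) with hJ
  set S : Set (ℝ × ℝ) := ((I ×ˢ J) ∩ Xset) \ {(a, b)} with hS
  have haI : a ∈ I := by constructor <;> linarith
  have hsJ : b - ε / 2 ∈ J := by constructor <;> linarith
  -- the spine at height b - ε/2
  have hLmem : ∀ x ∈ I, (x, b - ε / 2) ∈ S := by
    intro x hx
    have h1 : b - ε / 2 < |Real.sin x| := hlow x hx
    refine ⟨⟨⟨hx, hsJ⟩, ?_⟩, ?_⟩
    · show |b - ε / 2| ≤ |Real.sin x|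
      rw [abs_of_pos (by linarith)]; linarith
    · simp only [mem_singleton_iff, Prod.mk.injEq, not_and]
      intro _ h; linarith
  have hLS : (I ×ˢ {b - ε / 2} : Set (ℝ × ℝ)) ⊆ S := by
    rintro ⟨x, y⟩ ⟨hx, hy⟩
    simp only [mem_singleton_iff] at hy
    rw [hy]; exact hLmem x hx
  refine chain_preconn (z0 := (a, b - ε / 2))
    ((convex_Ioo _ _).prod (convex_singleton _)) ⟨haI, rfl⟩ hLS ?_
  rintro ⟨x, y⟩ ⟨⟨⟨hx, hy⟩, hX⟩, hne⟩
  have hX' : |y| ≤ |Real.sin x| := hX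
  simp only [mem_singleton_iff, Prod.mk.injEq, not_and] at hne
  by_cases hxa : x = a
  · subst hxa
    have hyb : y < b := by
      rcases lt_or_eq_of_le ((abs_le.mp (hb ▸ hX')).2) with h | h
      · exact h
      · exact absurd h (hne rfl)
    refine ⟨{x} ×ˢ Ioo (b - ε) b, {x} ×ˢ Ioo (b - ε) b,
      (convex_singleton _).prod (convex_Ioo _ _), (convex_singleton _).prod (convex_Ioo _ _),
      ⟨rfl, hy.1, hyb⟩, ?_, ?_, ⟨(x, y), ⟨rfl, hy.1, hyb⟩, ⟨rfl, hy.1, hyb⟩⟩,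
      ⟨(x, b - ε / 2), ⟨rfl, by constructor <;> linarith⟩, ⟨haI, rfl⟩⟩⟩ <;>
    · rintro ⟨x', y'⟩ ⟨hx', hy'⟩
      simp only [mem_singleton_iff] at hx'
      subst hx'
      refine ⟨⟨⟨haI, ⟨hy'.1, by linarith [hy'.2]⟩⟩, ?_⟩, ?_⟩
      · show |y'| ≤ |Real.sin x'|
        rw [hb, abs_of_pos (by linarith [hy'.1, hy'.2])]
        linarith [hy'.2]
      · simp only [mem_singleton_iff, Prod.mk.injEq, not_and]
        intro _ h; linarith [hy'.2]
  · have hlow' : b - ε / 2 < |Real.sin x| := hlow x hx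
    refine ⟨{x} ×ˢ (J ∩ Icc (-|Real.sin x|) |Real.sin x|),
      {x} ×ˢ (J ∩ Icc (-|Real.sin x|) |Real.sin x|),
      (convex_singleton _).prod ((convex_Ioo _ _).inter (convex_Icc _ _)),
      (convex_singleton _).prod ((convex_Ioo _ _).inter (convex_Icc _ _)),
      ⟨rfl, hy, abs_le.mp hX'⟩, ?_, ?_,
      ⟨(x, y), ⟨rfl, hy, abs_le.mp hX'⟩, ⟨rfl, hy, abs_le.mp hX'⟩⟩,
      ⟨(x, b - ε / 2), ⟨rfl, hsJ, by
        constructor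
        · have : (0:ℝ) ≤ |Real.sin x| := abs_nonneg _
          linarith
        · linarith⟩, ⟨hx, rfl⟩⟩⟩ <;>
    · rintro ⟨x', y'⟩ ⟨hx', hy'⟩
      simp only [mem_singleton_iff] at hx'
      subst hx'
      refine ⟨⟨⟨hx, hy'.1⟩, abs_le.mpr hy'.2⟩, ?_⟩
      simp only [mem_singleton_iff, Prod.mk.injEq, not_and]
      intro h; exact absurd h hxa

/-- Preconnectedness of a punctured neighborhood at a bottom boundary point. -/
lemma bottom_preconn {a b δ ε : ℝ} (hδ : 0 < δ) (hε : 0 < ε) (hεb : ε < -b)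
    (hb : |Real.sin a| = -b)
    (hlow : ∀ x ∈ Ioo (a - δ) (a + δ), -b - ε / 2 < |Real.sin x|) :
    IsPreconnected (((Ioo (a - δ) (a + δ) ×ˢ Ioo (b - ε) (b + ε)) ∩ Xset) \ {(a, b)}) := by
  have htop := top_preconn (b := -b) hδ hε hεb hb hlow
  have hcont : Continuous fun p : ℝ × ℝ => (p.1, -p.2) :=
    continuous_fst.prodMk continuous_snd.neg
  have himg : ((Ioo (a - δ) (a + δ) ×ˢ Ioo (b - ε) (b + ε)) ∩ Xset) \ {(a, b)} =
      (fun p : ℝ × ℝ => (p.1, -p.2)) ''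
        (((Ioo (a - δ) (a + δ) ×ˢ Ioo (-b - ε) (-b + ε)) ∩ Xset) \ {(a, -b)}) := by
    ext ⟨x, y⟩
    constructor
    · rintro ⟨⟨⟨hx, hy⟩, hX⟩, hne⟩
      have hX' : |y| ≤ |Real.sin x| := hX
      simp only [mem_singleton_iff, Prod.mk.injEq, not_and] at hne
      refine ⟨(x, -y), ⟨⟨⟨hx, ?_⟩, ?_⟩, ?_⟩, by simp⟩
      · exact ⟨by simp at hy ⊢; linarith [hy.2], by simp at hy ⊢; linarith [hy.1]⟩
      · show |(-y)| ≤ |Real.sin x|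
        rwa [abs_neg]
      · simp only [mem_singleton_iff, Prod.mk.injEq, not_and]
        intro hxa hyb
        exact hne hxa (by linarith [neg_inj.mp hyb])
    · rintro ⟨⟨x', y'⟩, ⟨⟨⟨hx', hy'⟩, hX⟩, hne⟩, heq⟩
      have hX' : |y'| ≤ |Real.sin x'| := hX
      simp only [Prod.mk.injEq] at heq
      obtain ⟨rfl, rfl⟩ := heq
      simp only [mem_singleton_iff, Prod.mk.injEq, not_and] at hne
      refine ⟨⟨⟨hx', ?_⟩, ?_⟩, ?_⟩
      · exact ⟨by simp at hy' ⊢; linarith [hy'.2], by simp at hy' ⊢; linarith [hy'.1]⟩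
      · show |(-y')| ≤ |Real.sin x'|
        rwa [abs_neg]
      · simp only [mem_singleton_iff, Prod.mk.injEq, not_and]
        intro hxa hyb
        exact hne hxa (by linarith)
  rw [himg]
  exact htop.image _ hcont.continuousOn

/-- Package an open planar set with connected punctured trace into a neighborhood witness. -/
lemma mk_nbhd (q : BraidSpace) (V W : Set (ℝ × ℝ)) (hWo : IsOpen W) (hWV : W ⊆ V)
    (hqW : q.1 ∈ W) (hne : ((W ∩ Xset) \ {q.1}).Nonempty)
    (hpc : IsPreconnected ((W ∩ Xset) \ {q.1})) :
    ∃ N : Set BraidSpace, IsOpen N ∧ q ∈ N ∧ N ⊆ (Subtype.val ⁻¹' V) ∧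
      IsConnected (N \ {q}) := by
  refine ⟨Subtype.val ⁻¹' W, hWo.preimage continuous_subtype_val, hqW,
    fun x hx => hWV hx, ?_⟩
  have hval : Subtype.val '' ((Subtype.val ⁻¹' W : Set BraidSpace) \ {q}) =
      (W ∩ Xset) \ {q.1} := by
    ext x
    constructor
    · rintro ⟨y, ⟨hyW, hyq⟩, rfl⟩
      exact ⟨⟨hyW, y.2⟩, fun h => hyq (Subtype.ext h)⟩
    · rintro ⟨⟨hxW, hxX⟩, hxq⟩
      exact ⟨⟨x, hxX⟩, ⟨hxW, fun h => hxq (congrArg Subtype.val h)⟩, rfl⟩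
  constructor
  · have : (Subtype.val '' ((Subtype.val ⁻¹' W : Set BraidSpace) \ {q})).Nonempty := by
      rw [hval]; exact hne
    exact Set.image_nonempty.mp this
  · exact IsInducing.subtypeVal.isPreconnected_image.mp (hval ▸ hpc)

/-- Every point of the braid space where the sine does not vanish is locally 1-component. -/
lemma locally_one_component (q : BraidSpace) (hq : Real.sin q.1.1 ≠ 0) :
    LocallyOneComponentAt q := by
  obtain ⟨⟨a, b⟩, hab⟩ := q
  have hq' : Real.sin a ≠ 0 := hq
  have hab' : |b| ≤ |Real.sin a| := hab
  intro U hU hqU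
  obtain ⟨V, hVo, rfl⟩ := IsInducing.subtypeVal.isOpen_iff.mp hU
  have hqV : ((a, b) : ℝ × ℝ) ∈ V := hqU
  obtain ⟨r, hr, hball⟩ := Metric.isOpen_iff.mp hVo _ hqV
  have hta : 0 < |Real.sin a| := abs_pos.mpr hq'
  set ta := |Real.sin a| with hta_def
  have hcont : ContinuousAt (fun x : ℝ => |Real.sin x|) a :=
    (Real.continuous_sin.abs).continuousAt
  rcases lt_or_eq_of_le hab' with hlt | heq
  · -- interior case
    set m := (ta - |b|) / 2 with hm_def
    have hm : 0 < m := by rw [hm_def]; linarith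
    obtain ⟨δ0, hδ0, hcl⟩ := Metric.continuousAt_iff.mp hcont m hm
    set ε := min m (r / 2) with hε_def
    set δ := min δ0 (r / 2) with hδ_def
    have hε : 0 < ε := lt_min hm (by linarith)
    have hδ : 0 < δ := lt_min hδ0 (by linarith)
    set W : Set (ℝ × ℝ) := Ioo (a - δ) (a + δ) ×ˢ Ioo (b - ε) (b + ε) with hW_def
    have hXsub : W ⊆ Xset := by
      rintro ⟨x, y⟩ ⟨hx, hy⟩
      have hdx : dist x a < δ0 := by
        rw [Real.dist_eq, abs_lt]
        have := min_le_left δ0 (r / 2)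
        exact ⟨by linarith [hx.1, hx.2], by linarith [hx.1, hx.2]⟩
      have h1 := hcl hdx
      simp only [Real.dist_eq] at h1
      rw [abs_lt] at h1
      have h2 : |y| - |b| ≤ |y - b| := abs_sub_abs_le_abs_sub y b
      have h3 : |y - b| < ε := by
        rw [abs_lt]; exact ⟨by linarith [hy.1], by linarith [hy.2]⟩
      have hεm : ε ≤ m := min_le_left _ _
      show |y| ≤ |Real.sin x|
      have : ta - m = |b| + m := by simp only [hm_def]; ring
      linarith [h1.1]
    have hWX : W ∩ Xset = W := Set.inter_eq_left.mpr hXsub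
    have hδr : δ ≤ r / 2 := min_le_right _ _
    have hεr : ε ≤ r / 2 := min_le_right _ _
    refine mk_nbhd _ V W (isOpen_Ioo.prod isOpen_Ioo) ?_ ?_ ?_ ?_
    · refine Subset.trans ?_ hball
      rintro ⟨x, y⟩ ⟨hx, hy⟩
      rw [Metric.mem_ball, Prod.dist_eq]
      refine max_lt ?_ ?_ <;> rw [Real.dist_eq, abs_lt] <;>
        constructor <;> [skip; skip; skip; skip] <;>
        first
          | (have := hx.1; have := hx.2; linarith)
          | (have := hy.1; have := hy.2; linarith)
    · exact ⟨⟨by linarith, by linarith⟩, ⟨by linarith, by linarith⟩⟩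
    · rw [hWX]
      refine ⟨(a + δ / 2, b), ⟨⟨by constructor <;> linarith, by constructor <;> linarith⟩, ?_⟩⟩
      simp only [mem_singleton_iff, Prod.mk.injEq, not_and]
      intro h; exfalso; linarith
    · rw [hWX]
      exact punctured_box_preconn hδ hε
  · -- boundary case
    rcases (abs_eq hta.le).mp heq with hbtop | hbbot
    · -- top : b = ta
      set ε := min (ta / 2) (r / 2) with hε_def
      have hε : 0 < ε := lt_min (by linarith) (by linarith)
      have hεb : ε < b := by rw [hbtop]; exact lt_of_le_of_lt (min_le_left _ _) (by linarith)
      obtain ⟨δ0, hδ0, hcl⟩ := Metric.continuousAt_iff.mp hcont (ε / 2) (by linarith)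
      set δ := min δ0 (r / 2) with hδ_def
      have hδ : 0 < δ := lt_min hδ0 (by linarith)
      have hδr : δ ≤ r / 2 := min_le_right _ _
      have hεr : ε ≤ r / 2 := min_le_right _ _
      have hlow : ∀ x ∈ Ioo (a - δ) (a + δ), b - ε / 2 < |Real.sin x| := by
        intro x hx
        have hdx : dist x a < δ0 := by
          rw [Real.dist_eq, abs_lt]
          have := min_le_left δ0 (r / 2)
          exact ⟨by nlinarith [hx.1, hx.2], by nlinarith [hx.1, hx.2]⟩
        have h1 := hcl hdx
        simp only [Real.dist_eq] at h1
        rw [abs_lt] at h1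
        rw [hbtop]
        linarith [h1.1]
      set W : Set (ℝ × ℝ) := Ioo (a - δ) (a + δ) ×ˢ Ioo (b - ε) (b + ε) with hW_def
      refine mk_nbhd _ V W (isOpen_Ioo.prod isOpen_Ioo) ?_ ?_ ?_ ?_
      · refine Subset.trans ?_ hball
        rintro ⟨x, y⟩ ⟨hx, hy⟩
        rw [Metric.mem_ball, Prod.dist_eq]
        refine max_lt ?_ ?_ <;> rw [Real.dist_eq, abs_lt] <;>
          constructor <;> [skip; skip; skip; skip] <;>
          first
            | (have := hx.1; have := hx.2; linarith)
            | (have := hy.1; have := hy.2; linarith)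
      · exact ⟨⟨by linarith, by linarith⟩, ⟨by linarith, by linarith⟩⟩
      · refine ⟨(a, b - ε / 2), ⟨⟨⟨by constructor <;> linarith,
          by constructor <;> linarith⟩, ?_⟩, ?_⟩⟩
        · show |b - ε / 2| ≤ ta
          rw [abs_of_pos (by linarith)]
          rw [hbtop]; linarith
        · simp only [mem_singleton_iff, Prod.mk.injEq, not_and]
          intro _ h; linarith
      · exact top_preconn hδ hε hεb (by rw [hbtop, ← hta_def]) hlow
    · -- bottom : b = -ta
      set ε := min (ta / 2) (r / 2) with hε_def
      have hε : 0 < ε := lt_min (by linarith) (by linarith)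
      have hεb : ε < -b := by rw [hbbot, neg_neg]; exact lt_of_le_of_lt (min_le_left _ _) (by linarith)
      obtain ⟨δ0, hδ0, hcl⟩ := Metric.continuousAt_iff.mp hcont (ε / 2) (by linarith)
      set δ := min δ0 (r / 2) with hδ_def
      have hδ : 0 < δ := lt_min hδ0 (by linarith)
      have hδr : δ ≤ r / 2 := min_le_right _ _
      have hεr : ε ≤ r / 2 := min_le_right _ _
      have hlow : ∀ x ∈ Ioo (a - δ) (a + δ), -b - ε / 2 < |Real.sin x| := by
        intro x hx
        have hdx : dist x a < δ0 := by
          rw [Real.dist_eq, abs_lt]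
          have := min_le_left δ0 (r / 2)
          exact ⟨by nlinarith [hx.1, hx.2], by nlinarith [hx.1, hx.2]⟩
        have h1 := hcl hdx
        simp only [Real.dist_eq] at h1
        rw [abs_lt] at h1
        have hnb : -b = ta := by rw [hbbot]; ring
        rw [hnb]
        linarith [h1.1]
      set W : Set (ℝ × ℝ) := Ioo (a - δ) (a + δ) ×ˢ Ioo (b - ε) (b + ε) with hW_def
      refine mk_nbhd _ V W (isOpen_Ioo.prod isOpen_Ioo) ?_ ?_ ?_ ?_
      · refine Subset.trans ?_ hball
        rintro ⟨x, y⟩ ⟨hx, hy⟩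
        rw [Metric.mem_ball, Prod.dist_eq]
        refine max_lt ?_ ?_ <;> rw [Real.dist_eq, abs_lt] <;>
          constructor <;> [skip; skip; skip; skip] <;>
          first
            | (have := hx.1; have := hx.2; linarith)
            | (have := hy.1; have := hy.2; linarith)
      · exact ⟨⟨by linarith, by linarith⟩, ⟨by linarith, by linarith⟩⟩
      · refine ⟨(a, b + ε / 2), ⟨⟨⟨by constructor <;> linarith,
          by constructor <;> linarith⟩, ?_⟩, ?_⟩⟩
        · show |b + ε / 2| ≤ ta
          have hb' : b = -ta := hbbot
          rw [abs_of_neg (by rw [hb']; linarith)]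
          rw [hb']; linarith
        · simp only [mem_singleton_iff, Prod.mk.injEq, not_and]
          intro _ h; linarith
      · exact bottom_preconn hδ hε hεb (by rw [hbbot, neg_neg, ← hta_def]) hlow

end BraidAux

theorem braidSpace_failure_set_discrete (p : BraidSpace) :
    ∃ N : Set BraidSpace, IsOpen N ∧ p ∈ N ∧
      ∀ q ∈ N, q ≠ p → LocallyOneComponentAt q := by
  by_cases hs : Real.sin p.1.1 = 0
  · -- pinch point: take a strip of width 2π around it
    have hb0 : p.1.2 = 0 := by
      have h := p.2
      rw [hs] at h
      simpa using h
    refine ⟨Subtype.val ⁻¹' (Set.Ioo (p.1.1 - Real.pi) (p.1.1 + Real.pi) ×ˢ Set.univ),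
      ((isOpen_Ioo.prod isOpen_univ).preimage continuous_subtype_val), ?_, ?_⟩
    · exact ⟨⟨by linarith [Real.pi_pos], by linarith [Real.pi_pos]⟩, trivial⟩
    · intro q hqN hne
      apply BraidAux.locally_one_component
      intro h0
      apply hne
      have hqb0 : q.1.2 = 0 := by
        have h := q.2
        rw [h0] at h
        simpa using h
      obtain ⟨n, hn⟩ := Real.sin_eq_zero_iff.mp h0
      obtain ⟨m, hm⟩ := Real.sin_eq_zero_iff.mp hs
      have hx : q.1.1 ∈ Set.Ioo (p.1.1 - Real.pi) (p.1.1 + Real.pi) := hqN.1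
      have hdiff : ((n - m : ℤ) : ℝ) * Real.pi = q.1.1 - p.1.1 := by
        push_cast
        linarith [hn, hm]
      have habs : |((n - m : ℤ) : ℝ)| * Real.pi < Real.pi := by
        rw [← abs_of_pos Real.pi_pos, ← abs_mul, hdiff, abs_of_pos Real.pi_pos, abs_lt]
        exact ⟨by linarith [hx.1], by linarith [hx.2]⟩
      have h1 : |((n - m : ℤ) : ℝ)| < 1 := by
        by_contra hge
        push_neg at hge
        nlinarith [Real.pi_pos]
      have h2 : |(n - m : ℤ)| < 1 := by exact_mod_cast h1
      have h3 : n - m = 0 := Int.abs_lt_one_iff.mp h2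
      have hxx : q.1.1 = p.1.1 := by
        have : ((n - m : ℤ) : ℝ) = 0 := by exact_mod_cast h3
        rw [this] at hdiff
        linarith [hdiff]
      apply Subtype.ext
      apply Prod.ext hxx (hqb0.trans hb0.symm)
  · -- non-pinch point: sine stays nonzero nearby
    refine ⟨Subtype.val ⁻¹' {x : ℝ × ℝ | Real.sin x.1 ≠ 0},
      (isOpen_compl_singleton.preimage (Real.continuous_sin.comp continuous_fst)).preimage
        continuous_subtype_val, hs, ?_⟩
    intro q hqN _
    exact BraidAux.locally_one_component q hqN
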